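/- The quasitriangular Hopf algebra ℂ[ℤ_n] with R = (1/n) Σ_{a,b=0}^{n-1} e^{-2πiab/n} gᵃ ⊗ gᵇ is factorizable (i.e., the Drinfeld map p ↦ (p⊗id)(R₂₁R) is a linear isomorphism) if and only if n is odd. -/

import Mathlib

open TensorProduct MonoidAlgebra

noncomputable section

/-- The group algebra `ℂ[ℤ_n]`. -/
abbrev GA (n : ℕ) : Type := MonoidAlgebra ℂ (Multiplicative (ZMod n))

/-- The generator `g` of `ℤ_n` inside `ℂ[ℤ_n]`. -/
def gen (n : ℕ) : Multiplicative (ZMod n) := Multiplicative.ofAdd (1 : ZMod n)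

/-- The diagonal group-like map `g ↦ g ⊗ g`. -/
def diagHom (n : ℕ) : Multiplicative (ZMod n) →* (GA n) ⊗[ℂ] (GA n) where
  toFun x := MonoidAlgebra.of ℂ (Multiplicative (ZMod n)) x ⊗ₜ[ℂ]
      MonoidAlgebra.of ℂ (Multiplicative (ZMod n)) x
  map_one' := by
    rw [Algebra.TensorProduct.one_def]
    simp [MonoidAlgebra.of_apply, MonoidAlgebra.one_def]
  map_mul' x y := by simp [Algebra.TensorProduct.tmul_mul_tmul]

/-- The comultiplication `Δ(g) = g ⊗ g` of the group Hopf algebra `ℂ[ℤ_n]`. -/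
def comulGA (n : ℕ) : GA n →ₐ[ℂ] (GA n) ⊗[ℂ] (GA n) :=
  MonoidAlgebra.lift ℂ _ (Multiplicative (ZMod n)) (diagHom n)

/-- The counit `ε(g) = 1` of the group Hopf algebra `ℂ[ℤ_n]`. -/
def counitGA (n : ℕ) : GA n →ₐ[ℂ] ℂ :=
  MonoidAlgebra.lift ℂ ℂ (Multiplicative (ZMod n)) 1

/-- The antipode `S(g) = g⁻¹` of the group Hopf algebra `ℂ[ℤ_n]`. -/
def antipodeGA (n : ℕ) : GA n →ₐ[ℂ] GA n :=
  MonoidAlgebra.lift ℂ _ (Multiplicative (ZMod n))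
    ((MonoidAlgebra.of ℂ (Multiplicative (ZMod n))).comp (invMonoidHom))

/-- The `R`-matrix `R = (1/n) Σ_{a,b} e^{-2πiab/n} gᵃ ⊗ gᵇ` on `ℂ[ℤ_n]`. -/
def Rmat (n : ℕ) : (GA n) ⊗[ℂ] (GA n) :=
  (n : ℂ)⁻¹ • ∑ a ∈ Finset.range n, ∑ b ∈ Finset.range n,
    Complex.exp (-2 * Real.pi * Complex.I * a * b / n) •
      (MonoidAlgebra.of ℂ (Multiplicative (ZMod n)) (gen n ^ a) ⊗ₜ[ℂ]
        MonoidAlgebra.of ℂ (Multiplicative (ZMod n)) (gen n ^ b))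

/-- `a ⊗ b ↦ a ⊗ b ⊗ 1` in `GA n ⊗ (GA n ⊗ GA n)`. -/
def R12' (n : ℕ) (R : (GA n) ⊗[ℂ] (GA n)) : (GA n) ⊗[ℂ] ((GA n) ⊗[ℂ] (GA n)) :=
  (Algebra.TensorProduct.map (AlgHom.id ℂ (GA n)) Algebra.TensorProduct.includeLeft) R

/-- `a ⊗ b ↦ a ⊗ 1 ⊗ b` in `GA n ⊗ (GA n ⊗ GA n)`. -/
def R13' (n : ℕ) (R : (GA n) ⊗[ℂ] (GA n)) : (GA n) ⊗[ℂ] ((GA n) ⊗[ℂ] (GA n)) :=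
  (Algebra.TensorProduct.map (AlgHom.id ℂ (GA n)) Algebra.TensorProduct.includeRight) R

/-- `a ⊗ b ↦ 1 ⊗ a ⊗ b` in `GA n ⊗ (GA n ⊗ GA n)`. -/
def R23' (n : ℕ) (R : (GA n) ⊗[ℂ] (GA n)) : (GA n) ⊗[ℂ] ((GA n) ⊗[ℂ] (GA n)) :=
  (Algebra.TensorProduct.includeRight :
    ((GA n) ⊗[ℂ] (GA n)) →ₐ[ℂ] (GA n) ⊗[ℂ] ((GA n) ⊗[ℂ] (GA n))) R

/-- The Drinfeld map `p ↦ (p ⊗ id)(R₂₁ R)` of `ℂ[ℤ_n]`. -/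
def drinfeldMapGA (n : ℕ) (p : Module.Dual ℂ (GA n)) : GA n :=
  (TensorProduct.lid ℂ (GA n))
    ((TensorProduct.map p LinearMap.id)
      ((TensorProduct.comm ℂ (GA n) (GA n)) (Rmat n) * Rmat n))

-- auxiliary defs
def Gm (n : ℕ) (x : ZMod n) : GA n :=
  MonoidAlgebra.of ℂ (Multiplicative (ZMod n)) (Multiplicative.ofAdd x)
def xi (n : ℕ) : ℂ := Complex.exp (-2 * Real.pi * Complex.I / n)
def Ee (n : ℕ) (x : ZMod n) : ℂ := xi n ^ x.val

lemma Gm_mul (n : ℕ) (x y : ZMod n) : Gm n x * Gm n y = Gm n (x + y) := by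
  rw [Gm, Gm, Gm, ← map_mul, ← ofAdd_add]

lemma xi_prim (n : ℕ) (hn : 0 < n) : IsPrimitiveRoot (xi n) n := by
  have h := Complex.isPrimitiveRoot_exp n hn.ne'
  have h2 : (-2 * Real.pi * Complex.I / n : ℂ) = -(2 * Real.pi * Complex.I / n) := by ring
  rw [xi, h2, Complex.exp_neg]
  exact h.inv

lemma xi_pow_n (n : ℕ) (hn : 0 < n) : xi n ^ n = 1 := (xi_prim n hn).pow_eq_one

lemma xi_pow_mod (n : ℕ) (hn : 0 < n) (k : ℕ) : xi n ^ k = xi n ^ (k % n) := by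
  conv_lhs => rw [← Nat.mod_add_div k n, pow_add, pow_mul, xi_pow_n n hn, one_pow, mul_one]

lemma Ee_natCast (n : ℕ) (hn : 0 < n) (k : ℕ) : Ee n (k : ZMod n) = xi n ^ k := by
  rw [Ee, ZMod.val_natCast, ← xi_pow_mod n hn]

lemma Ee_add (n : ℕ) (hn : 0 < n) (x y : ZMod n) : Ee n (x + y) = Ee n x * Ee n y := by
  haveI : NeZero n := ⟨hn.ne'⟩
  have : x + y = ((x.val + y.val : ℕ) : ZMod n) := by
    push_cast [ZMod.natCast_val, ZMod.cast_id]; ring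
  rw [this, Ee_natCast n hn, pow_add, Ee, Ee]

lemma Ee_mul_val (n : ℕ) (hn : 0 < n) (x y : ZMod n) : Ee n (x * y) = (Ee n y) ^ x.val := by
  haveI : NeZero n := ⟨hn.ne'⟩
  have : x * y = ((x.val * y.val : ℕ) : ZMod n) := by
    push_cast [ZMod.natCast_val, ZMod.cast_id]; ring
  rw [this, mul_comm x.val, Ee_natCast n hn, pow_mul, Ee]

lemma Ee_zero (n : ℕ) : Ee n 0 = 1 := by simp [Ee]

lemma sum_zmod_eq_range {M : Type*} [AddCommMonoid M] (n : ℕ) [NeZero n] (f : ZMod n → M) :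
    ∑ x : ZMod n, f x = ∑ a ∈ Finset.range n, f (a : ZMod n) := by
  rw [Finset.sum_bij' (fun (x : ZMod n) _ => x.val) (fun a _ => (a : ZMod n))]
  · intro x _; exact Finset.mem_range.2 (ZMod.val_lt x)
  · intro a ha; exact Finset.mem_univ _
  · intro x _; rw [ZMod.natCast_val, ZMod.cast_id]
  · intro a ha; exact ZMod.val_natCast_of_lt (Finset.mem_range.1 ha)
  · intro x _; rw [ZMod.natCast_val, ZMod.cast_id]

lemma Ee_eq_one_iff (n : ℕ) (hn : 0 < n) (t : ZMod n) : Ee n t = 1 ↔ t = 0 := by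
  haveI : NeZero n := ⟨hn.ne'⟩
  rw [Ee, (xi_prim n hn).pow_eq_one_iff_dvd]
  constructor
  · intro h
    have := Nat.eq_zero_of_dvd_of_lt h (ZMod.val_lt t)
    · exact (ZMod.val_eq_zero t).1 (by omega)
  · rintro rfl; simp

lemma Ee_orth (n : ℕ) [NeZero n] (t : ZMod n) :
    ∑ x : ZMod n, Ee n (x * t) = if t = 0 then (n : ℂ) else 0 := by
  have hn : 0 < n := Nat.pos_of_ne_zero (NeZero.ne n)
  rw [sum_zmod_eq_range]
  have step : ∀ a ∈ Finset.range n, Ee n ((a : ZMod n) * t) = (Ee n t) ^ a := by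
    intro a ha
    rw [Ee_mul_val n hn, ZMod.val_natCast_of_lt (Finset.mem_range.1 ha)]
  rw [Finset.sum_congr rfl step]
  have hzn : (Ee n t) ^ n = 1 := by
    rw [Ee, ← pow_mul, mul_comm, pow_mul, xi_pow_n n hn, one_pow]
  by_cases ht : t = 0
  · subst ht; simp [Ee_zero]
  · have hz1 : Ee n t ≠ 1 := fun h => ht ((Ee_eq_one_iff n hn t).1 h)
    rw [geom_sum_eq hz1, hzn, if_neg ht]
    simp

lemma RmatZ (n : ℕ) [NeZero n] (hn : 0 < n) :
    Rmat n = (n:ℂ)⁻¹ • ∑ a : ZMod n, ∑ b : ZMod n,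
      Ee n (a * b) • (Gm n a ⊗ₜ[ℂ] Gm n b) := by
  rw [Rmat, sum_zmod_eq_range]
  congr 1
  refine Finset.sum_congr rfl fun a _ => ?_
  rw [sum_zmod_eq_range]
  refine Finset.sum_congr rfl fun b _ => ?_
  have h4 : ∀ (k : ℕ), MonoidAlgebra.of ℂ (Multiplicative (ZMod n)) (gen n ^ k)
      = Gm n (k : ZMod n) := by
    intro k; rw [Gm]; congr 1; rw [gen, ← ofAdd_nsmul]; congr 1; simp
  have h1 : ((a : ZMod n) * (b : ZMod n)) = ((a * b : ℕ) : ZMod n) := by push_cast; ring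
  have h3 : Complex.exp (-2 * Real.pi * Complex.I * a * b / n) = xi n ^ (a * b) := by
    rw [xi, ← Complex.exp_nat_mul]; congr 1; push_cast; ring
  rw [h1, Ee_natCast n hn, h3, h4, h4]

lemma drinfeld_formula (n : ℕ) [NeZero n] (hn : 0 < n) (p : Module.Dual ℂ (GA n)) :
    drinfeldMapGA n p = (n:ℂ)⁻¹ • ∑ c : ZMod n, ∑ s : ZMod n,
      (Ee n (c * s) * p (Gm n (2 * c))) • Gm n s := by
  have hnc : (n : ℂ) ≠ 0 := Nat.cast_ne_zero.2 hn.ne'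
  have hcomm : (TensorProduct.comm ℂ (GA n) (GA n)) (Rmat n)
      = (n:ℂ)⁻¹ • ∑ a : ZMod n, ∑ b : ZMod n, Ee n (a * b) • (Gm n b ⊗ₜ[ℂ] Gm n a) := by
    rw [RmatZ n hn, map_smul, map_sum]
    congr 1
    refine Finset.sum_congr rfl fun a _ => ?_
    rw [map_sum]
    refine Finset.sum_congr rfl fun b _ => ?_
    rw [map_smul, TensorProduct.comm_tmul]
  rw [drinfeldMapGA, hcomm, RmatZ n hn, smul_mul_smul_comm]
  simp_rw [Finset.sum_mul, Finset.mul_sum, smul_mul_smul_comm,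
    Algebra.TensorProduct.tmul_mul_tmul, Gm_mul]
  simp only [map_smul, map_sum, TensorProduct.map_tmul, TensorProduct.lid_tmul,
    LinearMap.id_coe, id_eq, smul_smul]
  have hrei : ∀ a b c : ZMod n,
      (∑ d : ZMod n, ((Ee n (a * b) * Ee n (c * d)) * p (Gm n (b + c))) • Gm n (a + d))
      = ∑ s : ZMod n, ((Ee n (a * (b - c)) * Ee n (c * s)) * p (Gm n (b + c))) • Gm n s := by
    intro a b c
    refine (Fintype.sum_equiv (Equiv.subRight a) _ _ fun s => ?_).symm
    have h5 : a + (s - a) = s := by ring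
    have h6 : Ee n (a * (b - c)) * Ee n (c * s) = Ee n (a * b) * Ee n (c * (s - a)) := by
      rw [← Ee_add n hn, ← Ee_add n hn]; congr 1; ring
    simp only [Equiv.subRight_apply, h5, h6]
  simp_rw [hrei]
  have horth : ∀ b c : ZMod n, (∑ a : ZMod n, Ee n (a * (b - c))) = if b = c then (n:ℂ) else 0 := by
    intro b c
    rw [Ee_orth n (b - c)]
    simp [sub_eq_zero]
  have key : ∀ b c s : ZMod n,
      (∑ a : ZMod n, ((Ee n (a * (b - c)) * Ee n (c * s)) * p (Gm n (b + c))) • Gm n s)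
      = if b = c then (((n:ℂ) * (Ee n (c * s) * p (Gm n (b + c)))) • Gm n s) else 0 := by
    intro b c s
    simp_rw [mul_assoc]
    rw [← Finset.sum_smul, ← Finset.sum_mul, horth b c]
    split <;> simp
  have hBIG : (∑ a : ZMod n, ∑ b : ZMod n, ∑ c : ZMod n, ∑ s : ZMod n,
        ((Ee n (a * (b - c)) * Ee n (c * s)) * p (Gm n (b + c))) • Gm n s)
      = (n:ℂ) • ∑ c : ZMod n, ∑ s : ZMod n, (Ee n (c * s) * p (Gm n (2 * c))) • Gm n s := by
    have hmove : (∑ a : ZMod n, ∑ b : ZMod n, ∑ c : ZMod n, ∑ s : ZMod n,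
          ((Ee n (a * (b - c)) * Ee n (c * s)) * p (Gm n (b + c))) • Gm n s)
        = ∑ b : ZMod n, ∑ c : ZMod n, ∑ s : ZMod n, ∑ a : ZMod n,
          ((Ee n (a * (b - c)) * Ee n (c * s)) * p (Gm n (b + c))) • Gm n s := by
      rw [Finset.sum_comm]
      refine Finset.sum_congr rfl fun b _ => ?_
      rw [Finset.sum_comm]
      refine Finset.sum_congr rfl fun c _ => ?_
      rw [Finset.sum_comm]
    rw [hmove]
    simp_rw [key]
    rw [Finset.sum_comm]
    simp_rw [Finset.sum_ite_irrel, Finset.sum_const_zero, Finset.sum_ite_eq',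
      Finset.mem_univ, if_true]
    have h2c : ∀ c : ZMod n, c + c = 2 * c := fun c => (two_mul c).symm
    simp_rw [h2c, mul_smul, ← Finset.smul_sum]
  rw [hBIG, smul_smul, show ((n:ℂ)⁻¹ * (n:ℂ)⁻¹) * n = (n:ℂ)⁻¹ by field_simp]
lemma drinfeld_apply (n : ℕ) [NeZero n] (hn : 0 < n) (p : Module.Dual ℂ (GA n)) (t : ZMod n) :
    (drinfeldMapGA n p).coeff (Multiplicative.ofAdd t)
      = (n:ℂ)⁻¹ * ∑ c : ZMod n, Ee n (c * t) * p (Gm n (2 * c)) := by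
  rw [drinfeld_formula n hn p]
  have hG : ∀ s : ZMod n, (Finsupp.lapply (R := ℂ) (Multiplicative.ofAdd t) ∘ₗ
      (MonoidAlgebra.coeffLinearEquiv (S := ℂ) (M := Multiplicative (ZMod n)) ℂ).toLinearMap) (Gm n s)
      = if s = t then (1:ℂ) else 0 := by
    intro s
    rw [LinearMap.comp_apply, Finsupp.lapply_apply]
    show (Finsupp.single (Multiplicative.ofAdd s) (1:ℂ)) (Multiplicative.ofAdd t) = _
    rw [Finsupp.single_apply]
    simp
  have key : ∀ (x : GA n), x.coeff (Multiplicative.ofAdd t)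
      = (Finsupp.lapply (R := ℂ) (Multiplicative.ofAdd t) ∘ₗ
      (MonoidAlgebra.coeffLinearEquiv (S := ℂ) (M := Multiplicative (ZMod n)) ℂ).toLinearMap) x :=
    fun _ => rfl
  rw [key, map_smul, map_sum]
  simp only [map_sum, map_smul, hG, smul_eq_mul, mul_ite, mul_one,
    mul_zero, Finset.sum_ite_eq', Finset.mem_univ, if_true]


/-- The quasitriangular Hopf algebra `ℂ[ℤ_n]` with
`R = (1/n) Σ_{a,b} e^{-2πiab/n} gᵃ ⊗ gᵇ` is factorizable (the Drinfeld map
`p ↦ (p ⊗ id)(R₂₁R)` is a linear isomorphism) if and only if `n` is odd. -/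
theorem group_algebra_factorizable_iff_odd (n : ℕ) (hn : 0 < n) :
    Function.Bijective (drinfeldMapGA n) ↔ Odd n := by
  haveI : NeZero n := ⟨hn.ne'⟩
  have hnc : (n : ℂ) ≠ 0 := Nat.cast_ne_zero.2 hn.ne'
  constructor
  · -- bijective → odd
    intro hbij
    by_contra hodd
    have heven : Even n := Nat.not_odd_iff_even.1 hodd
    obtain ⟨m, hm⟩ := heven
    have hmpos : 0 < m := by omega
    have hmlt : m < n := by omega
    -- Ee n m = -1
    have hEm : Ee n ((m : ℕ) : ZMod n) = -1 := by
      have h1 : Ee n ((m : ℕ) : ZMod n) = xi n ^ m := Ee_natCast n hn m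
      have hsq : (xi n ^ m) * (xi n ^ m) = 1 := by
        rw [← pow_add, show m + m = n from hm.symm, xi_pow_n n hn]
      have hne : xi n ^ m ≠ 1 := (xi_prim n hn).pow_ne_one_of_pos_of_lt hmpos.ne' hmlt
      rcases mul_self_eq_one_iff.1 hsq with h | h
      · exact absurd h hne
      · rw [h1, h]
    have h2m : (2 : ZMod n) * ((m : ℕ) : ZMod n) = 0 := by
      have : ((2 * m : ℕ) : ZMod n) = ((n : ℕ) : ZMod n) := by rw [show 2 * m = n by omega]
      push_cast at this
      rw [this, ZMod.natCast_self]
    obtain ⟨p, hp⟩ := hbij.2 (Gm n 1)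
    have hval : (Gm n (1 : ZMod n)).coeff (Multiplicative.ofAdd (1 : ZMod n)) = 1 := by
      rw [Gm, MonoidAlgebra.of_apply, MonoidAlgebra.coeff_single_apply]
      simp
    have happ := drinfeld_apply n hn p 1
    rw [hp, hval] at happ
    have hsum : ∑ c : ZMod n, Ee n (c * 1) * p (Gm n (2 * c)) = 0 := by
      apply Finset.sum_ninvolution (fun c => c + ((m : ℕ) : ZMod n))
      · intro c
        have e1 : Ee n ((c + ((m : ℕ) : ZMod n)) * 1) = Ee n (c * 1) * (-1) := by
          rw [show (c + ((m : ℕ) : ZMod n)) * 1 = c * 1 + ((m : ℕ) : ZMod n) from by ring,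
            Ee_add n hn, hEm]
        have e2 : (2 : ZMod n) * (c + ((m : ℕ) : ZMod n)) = 2 * c := by
          rw [mul_add, h2m, add_zero]
        rw [e1, e2]
        ring
      · intro c _ hgc
        have h0 : ((m : ℕ) : ZMod n) = 0 := by
          have := hgc
          rwa [add_eq_left] at this
        rw [ZMod.natCast_eq_zero_iff] at h0
        have := Nat.le_of_dvd hmpos h0
        omega
      · intro c; exact Finset.mem_univ _
      · intro c
        have : (c + ((m : ℕ) : ZMod n)) + ((m : ℕ) : ZMod n) = c + ((2 * m : ℕ) : ZMod n) := by
          push_cast; ring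
        rw [this, show ((2 * m : ℕ) : ZMod n) = 0 by rw [show 2 * m = n by omega]; exact ZMod.natCast_self n, add_zero]
    rw [hsum, mul_zero] at happ
    exact one_ne_zero happ
  · -- odd → bijective
    intro hodd
    have hadd : ∀ p q : Module.Dual ℂ (GA n),
        drinfeldMapGA n (p + q) = drinfeldMapGA n p + drinfeldMapGA n q := by
      intro p q
      simp only [drinfeld_formula n hn, LinearMap.add_apply, mul_add, add_smul,
        Finset.sum_add_distrib, smul_add]
    have hsmul : ∀ (c : ℂ) (p : Module.Dual ℂ (GA n)),
        drinfeldMapGA n (c • p) = c • drinfeldMapGA n p := by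
      intro c p
      simp only [drinfeld_formula n hn, LinearMap.smul_apply, smul_eq_mul, mul_left_comm _ c,
        mul_smul, ← Finset.smul_sum]
      rw [smul_comm]
    let L : Module.Dual ℂ (GA n) →ₗ[ℂ] GA n :=
      { toFun := drinfeldMapGA n
        map_add' := hadd
        map_smul' := fun c p => hsmul c p }
    have hinj : Function.Injective L := by
      refine (injective_iff_map_eq_zero L).2 fun p hp => ?_
      have hp' : drinfeldMapGA n p = 0 := hp
      have hcoef : ∀ t : ZMod n, ∑ c : ZMod n, Ee n (c * t) * p (Gm n (2 * c)) = 0 := by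
        intro t
        have h := drinfeld_apply n hn p t
        rw [hp'] at h
        have h0 : (0 : GA n).coeff (Multiplicative.ofAdd t) = 0 := rfl
        rw [h0] at h
        rcases mul_eq_zero.1 h.symm with h1 | h1
        · exact absurd h1 (inv_ne_zero hnc)
        · exact h1
      have hF : ∀ c₀ : ZMod n, p (Gm n (2 * c₀)) = 0 := by
        intro c₀
        have h1 : ∑ t : ZMod n, Ee n (-(c₀ * t)) *
            (∑ c : ZMod n, Ee n (c * t) * p (Gm n (2 * c))) = 0 := by
          simp_rw [hcoef, mul_zero, Finset.sum_const_zero]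
        have h2 : ∑ t : ZMod n, Ee n (-(c₀ * t)) *
            (∑ c : ZMod n, Ee n (c * t) * p (Gm n (2 * c)))
            = (n : ℂ) * p (Gm n (2 * c₀)) := by
          simp_rw [Finset.mul_sum]
          rw [Finset.sum_comm]
          have hcomb : ∀ c t : ZMod n, Ee n (-(c₀ * t)) * (Ee n (c * t) * p (Gm n (2 * c)))
              = Ee n (t * (c - c₀)) * p (Gm n (2 * c)) := by
            intro c t
            rw [← mul_assoc, ← Ee_add n hn]
            congr 2
            ring
          simp_rw [hcomb, ← Finset.sum_mul, Ee_orth n, sub_eq_zero, ite_mul, zero_mul,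
            Finset.sum_ite_eq', Finset.mem_univ, if_true]
        rw [h1] at h2
        rcases mul_eq_zero.1 h2.symm with h3 | h3
        · exact absurd h3 hnc
        · exact h3
      have h2sur : ∀ x : ZMod n, ∃ c : ZMod n, 2 * c = x := by
        obtain ⟨m, hm⟩ := hodd
        intro x
        refine ⟨((m + 1 : ℕ) : ZMod n) * x, ?_⟩
        have he : (2 : ZMod n) * ((m + 1 : ℕ) : ZMod n) = ((2 * (m + 1) : ℕ) : ZMod n) := by
          push_cast; ring
        rw [← mul_assoc, he, show 2 * (m + 1) = n + 1 by omega]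
        push_cast [ZMod.natCast_self]
        simp
      have hpz : ∀ x : ZMod n, p (Gm n x) = 0 := by
        intro x
        obtain ⟨c, hc⟩ := h2sur x
        rw [← hc]
        exact hF c
      refine MonoidAlgebra.lhom_ext' fun a => LinearMap.ext fun b => ?_
      have hsing : (MonoidAlgebra.single a b : GA n) = b • Gm n a.toAdd := by
        rw [Gm, ofAdd_toAdd, MonoidAlgebra.smul_of]
      show p (MonoidAlgebra.single a b) = (0 : Module.Dual ℂ (GA n)) (MonoidAlgebra.single a b)
      rw [hsing, map_smul, hpz, smul_zero]
      simp
    haveI hfd : FiniteDimensional ℂ (GA n) :=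
      Module.Finite.of_basis (MonoidAlgebra.basis (Multiplicative (ZMod n)) ℂ)
    have hsurj : Function.Surjective L :=
      (LinearMap.injective_iff_surjective_of_finrank_eq_finrank
        (Subspace.dual_finrank_eq)).1 hinj
    exact ⟨hinj, hsurj⟩


end
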